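/- If a Hausdorff topological space X has a countable Pytkeev network, then the hyperspace exp(X) of nonempty compact subsets of X with the Vietoris topology has a countable Pytkeev network. -/

import Mathlib

open Set Filter Topology TopologicalSpace

/-- A set `A` accumulates at `x` if every neighborhood of `x` contains
infinitely many points of `A`. -/
def AccumulatesAt {X : Type*} [TopologicalSpace X] (A : Set X) (x : X) : Prop :=
  ∀ U ∈ 𝓝 x, (U ∩ A).Infinite

/-- `𝒩` is a network: for each point and open neighborhood there is a member of `𝒩`
containing the point and contained in the neighborhood. -/
def IsNetwork {X : Type*} [TopologicalSpace X] (𝒩 : Set (Set X)) : Prop :=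
  ∀ (x : X) (U : Set X), IsOpen U → x ∈ U → ∃ N ∈ 𝒩, x ∈ N ∧ N ⊆ U

/-- `𝒩` is a Pytkeev network. -/
def IsPytkeevNetwork {X : Type*} [TopologicalSpace X] (𝒩 : Set (Set X)) : Prop :=
  IsNetwork 𝒩 ∧ ∀ (x : X) (U : Set X), IsOpen U → x ∈ U →
    ∀ A : Set X, AccumulatesAt A x → ∃ N ∈ 𝒩, N ⊆ U ∧ (N ∩ A).Infinite

/-- `𝒩` is a k-network. -/
def IsKNetwork {X : Type*} [TopologicalSpace X] (𝒩 : Set (Set X)) : Prop :=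
  ∀ (U K : Set X), IsOpen U → IsCompact K → K ⊆ U →
    ∃ F ⊆ 𝒩, F.Finite ∧ K ⊆ ⋃₀ F ∧ ⋃₀ F ⊆ U

/-- The hyperspace of nonempty compact subsets of `X`. -/
def NonemptyCompactSubsets (X : Type*) [TopologicalSpace X] : Type _ :=
  {K : Set X // IsCompact K ∧ K.Nonempty}

/-- The Vietoris topology on the hyperspace of nonempty compact subsets. -/
def vietorisTopology (X : Type*) [TopologicalSpace X] :
    TopologicalSpace (NonemptyCompactSubsets X) :=
  TopologicalSpace.generateFrom
    ({S | ∃ U : Set X, IsOpen U ∧ S = {K : NonemptyCompactSubsets X | K.1 ⊆ U}} ∪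
     {S | ∃ U : Set X, IsOpen U ∧ S = {K : NonemptyCompactSubsets X | (K.1 ∩ U).Nonempty}})


/- ### Auxiliary machinery ### -/

set_option linter.unusedSectionVars false
set_option linter.unusedVariables false

section Aux
variable {X : Type*} [TopologicalSpace X]

lemma accum_inter_nhds {A : Set X} {x : X} (h : AccumulatesAt A x) {S : Set X}
    (hS : S ∈ 𝓝 x) : AccumulatesAt (A ∩ S) x := by
  intro U hU
  have h2 := h (U ∩ S) (Filter.inter_mem hU hS)
  refine Set.Infinite.mono ?_ h2
  intro y hy
  exact ⟨hy.1.1, hy.2, hy.1.2⟩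

lemma accum_mono {A B : Set X} {x : X} (h : AccumulatesAt A x) (hAB : A ⊆ B) :
    AccumulatesAt B x := fun U hU => (h U hU).mono (fun y hy => ⟨hy.1, hAB hy.2⟩)

lemma accum_union {A B₁ B₂ : Set X} {x : X} (h : AccumulatesAt A x) (hsub : A ⊆ B₁ ∪ B₂) :
    AccumulatesAt (A ∩ B₁) x ∨ AccumulatesAt (A ∩ B₂) x := by
  by_contra hc
  push_neg at hc
  obtain ⟨h1, h2⟩ := hc
  simp only [AccumulatesAt, not_forall] at h1 h2
  obtain ⟨U1, hU1, hU1f⟩ := h1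
  obtain ⟨U2, hU2, hU2f⟩ := h2
  rw [Set.not_infinite] at hU1f hU2f
  have : (U1 ∩ U2) ∩ A ⊆ (U1 ∩ (A ∩ B₁)) ∪ (U2 ∩ (A ∩ B₂)) := by
    rintro y ⟨⟨hy1, hy2⟩, hyA⟩
    rcases hsub hyA with hB | hB
    · exact Or.inl ⟨hy1, hyA, hB⟩
    · exact Or.inr ⟨hy2, hyA, hB⟩
  exact (h _ (Filter.inter_mem hU1 hU2)) ((hU1f.union hU2f).subset this)

lemma accum_finset_union {ι : Type*} [DecidableEq ι] {A : Set X} {x : X} (s : Finset ι) (B : ι → Set X)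
    (h : AccumulatesAt A x) (hsub : A ⊆ ⋃ i ∈ s, B i) :
    ∃ i ∈ s, AccumulatesAt (A ∩ B i) x := by
  induction s using Finset.induction generalizing A with
  | empty =>
    simp only [Finset.notMem_empty, Set.iUnion_of_empty, Set.iUnion_empty] at hsub
    exact absurd (Set.eq_empty_iff_forall_notMem.2 (fun y hy => hsub hy))
      (fun hA => by
        have := h Set.univ Filter.univ_mem
        rw [hA] at this
        simp [Set.not_infinite] at this)
  | @insert a s ha ih =>
    have hsub' : A ⊆ B a ∪ ⋃ i ∈ s, B i := by
      intro y hy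
      have := hsub hy
      simp only [Finset.mem_insert, Set.mem_iUnion] at this
      obtain ⟨i, hi | hi, hyi⟩ := this
      · subst hi; exact Or.inl hyi
      · exact Or.inr (Set.mem_iUnion₂.2 ⟨i, hi, hyi⟩)
    rcases accum_union h hsub' with hy | hy
    · exact ⟨a, Finset.mem_insert_self a s, hy⟩
    · obtain ⟨i, hi, hacc⟩ := ih hy (fun y hy => hy.2)
      refine ⟨i, Finset.mem_insert_of_mem hi, accum_mono hacc ?_⟩
      intro y hy
      exact ⟨hy.1.1, hy.2⟩

/-- Every infinite subset of a compact set has an ω-accumulation point in it. -/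
lemma exists_accum_of_infinite {K S : Set X} (hK : IsCompact K) (hS : S ⊆ K)
    (hinf : S.Infinite) : ∃ z ∈ K, AccumulatesAt S z := by
  by_contra hc
  push_neg at hc
  have key : ∀ z ∈ K, ∃ U ∈ 𝓝 z, (U ∩ S).Finite := by
    intro z hz
    have := hc z hz
    simp only [AccumulatesAt, not_forall] at this
    obtain ⟨U, hU, hUf⟩ := this
    exact ⟨U, hU, Set.not_infinite.1 hUf⟩
  choose! U hU hUf using key
  obtain ⟨t, htK, hcov⟩ := hK.elim_nhds_subcover U (fun z hz => hU z hz)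
  apply hinf
  have : S ⊆ ⋃ z ∈ t, (U z ∩ S) := by
    intro y hy
    have := hcov (hS hy)
    simp only [Set.mem_iUnion] at this ⊢
    obtain ⟨z, hz, hyz⟩ := this
    exact ⟨z, hz, hyz, hy⟩
  exact (t.finite_toSet.biUnion (fun z hz => hUf z (htK z hz))).subset this

end Aux

section Aux2
variable {X : Type*} [TopologicalSpace X]

/-- closure of a family under finite nonempty unions -/
def uClose (𝒩 : Set (Set X)) : Set (Set X) :=
  (fun G => ⋃₀ G) '' {G : Set (Set X) | G.Finite ∧ G.Nonempty ∧ G ⊆ 𝒩}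

lemma subset_uClose (𝒩 : Set (Set X)) : 𝒩 ⊆ uClose 𝒩 := by
  intro N hN
  exact ⟨{N}, ⟨Set.finite_singleton N, Set.singleton_nonempty N,
    Set.singleton_subset_iff.2 hN⟩, by simp⟩

lemma uClose_countable {𝒩 : Set (Set X)} (h : 𝒩.Countable) : (uClose 𝒩).Countable := by
  apply Set.Countable.image
  apply Set.Countable.mono _ (Set.countable_setOf_finite_subset h)
  intro G hG
  exact ⟨hG.1, hG.2.2⟩

lemma uClose_union {𝒩 : Set (Set X)} {A B : Set X} (hA : A ∈ uClose 𝒩)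
    (hB : B ∈ uClose 𝒩) : A ∪ B ∈ uClose 𝒩 := by
  obtain ⟨G1, ⟨hf1, hn1, hs1⟩, rfl⟩ := hA
  obtain ⟨G2, ⟨hf2, hn2, hs2⟩, rfl⟩ := hB
  exact ⟨G1 ∪ G2, ⟨hf1.union hf2, hn1.mono Set.subset_union_left,
    Set.union_subset hs1 hs2⟩, by simp [Set.sUnion_union]⟩

lemma uClose_pytkeev {𝒩 : Set (Set X)} (h : IsPytkeevNetwork 𝒩) :
    IsPytkeevNetwork (uClose 𝒩) := by
  constructor
  · intro x U hU hx
    obtain ⟨N, hN, hxN, hNU⟩ := h.1 x U hU hx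
    exact ⟨N, subset_uClose 𝒩 hN, hxN, hNU⟩
  · intro x U hU hx A hA
    obtain ⟨N, hN, hNU, hinf⟩ := h.2 x U hU hx A hA
    exact ⟨N, subset_uClose 𝒩 hN, hNU, hinf⟩

/-- increasing cofinal chain in `{N ∈ 𝒩 | N ⊆ U}` -/
lemma exists_chain {𝒩 : Set (Set X)} (hc : 𝒩.Countable)
    (hu : ∀ A ∈ 𝒩, ∀ B ∈ 𝒩, A ∪ B ∈ 𝒩) {U : Set X}
    (hne : ∃ N ∈ 𝒩, N ⊆ U) :
    ∃ C : ℕ → Set X, (∀ t, C t ∈ 𝒩 ∧ C t ⊆ U) ∧ (∀ s t, s ≤ t → C s ⊆ C t) ∧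
      (∀ N ∈ 𝒩, N ⊆ U → ∃ t, N ⊆ C t) := by
  have hcs : {N | N ∈ 𝒩 ∧ N ⊆ U}.Countable := hc.mono (fun N hN => hN.1)
  have hns : {N | N ∈ 𝒩 ∧ N ⊆ U}.Nonempty := by
    obtain ⟨N, hN, hNU⟩ := hne; exact ⟨N, hN, hNU⟩
  obtain ⟨f, hf⟩ := hcs.exists_eq_range hns
  have hfmem : ∀ t, f t ∈ 𝒩 ∧ f t ⊆ U := by
    intro t
    have : f t ∈ {N | N ∈ 𝒩 ∧ N ⊆ U} := hf ▸ Set.mem_range_self t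
    exact this
  refine ⟨fun t => Nat.rec (f 0) (fun n Cn => Cn ∪ f (n + 1)) t, ?_, ?_, ?_⟩
  · intro t
    induction t with
    | zero => exact hfmem 0
    | succ n ih =>
      exact ⟨hu _ ih.1 _ (hfmem (n + 1)).1, Set.union_subset ih.2 (hfmem (n + 1)).2⟩
  · intro s t hst
    induction t with
    | zero => rw [Nat.le_zero.1 hst]
    | succ n ih =>
      rcases Nat.lt_or_ge s (n + 1) with hlt | hge
      · exact (ih (Nat.lt_succ_iff.1 hlt)).trans Set.subset_union_left
      · rw [Nat.le_antisymm hst hge]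
  · intro N hN hNU
    have : N ∈ {N | N ∈ 𝒩 ∧ N ⊆ U} := ⟨hN, hNU⟩
    rw [hf] at this
    obtain ⟨t, ht⟩ := this
    refine ⟨t, ?_⟩
    rw [← ht]
    clear ht
    induction t with
    | zero => exact Set.Subset.rfl
    | succ n _ => exact Set.subset_union_right

/-- every nonempty compact subset of `U` is contained in some element of the chain -/
lemma compact_subset_chain {𝒩 : Set (Set X)} (h𝒩 : IsPytkeevNetwork 𝒩)
    {C : ℕ → Set X} {U : Set X} (hO : IsOpen U)
    (hmono : ∀ s t, s ≤ t → C s ⊆ C t)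
    (hcof : ∀ N ∈ 𝒩, N ⊆ U → ∃ t, N ⊆ C t)
    {K : Set X} (hK : IsCompact K) (hKU : K ⊆ U) : ∃ t, K ⊆ C t := by
  by_contra hcon
  push_neg at hcon
  have hx : ∀ t : ℕ, ∃ p, p ∈ K ∧ p ∉ C t := by
    intro t
    obtain ⟨p, hp1, hp2⟩ := Set.not_subset.1 (hcon t)
    exact ⟨p, hp1, hp2⟩
  choose x hxK hxC using hx
  by_cases hfin : (Set.range x).Finite
  · -- some value is attained for unboundedly many t
    have hfib : ∃ p ∈ Set.range x, {t | x t = p}.Infinite := by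
      by_contra hfc
      push_neg at hfc
      have : (Set.univ : Set ℕ) ⊆ ⋃ p ∈ Set.range x, {t | x t = p} := by
        intro t _
        simp only [Set.mem_iUnion]
        exact ⟨x t, Set.mem_range_self t, rfl⟩
      exact Set.infinite_univ ((hfin.biUnion
        (fun p hp => (hfc p hp))).subset this)
    obtain ⟨p, hpr, hpinf⟩ := hfib
    have hpK : p ∈ K := by obtain ⟨t, rfl⟩ := hpr; exact hxK t
    obtain ⟨N, hN, hpN, hNU⟩ := h𝒩.1 p U hO (hKU hpK)
    obtain ⟨t₁, ht₁⟩ := hcof N hN hNU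
    obtain ⟨t, htmem, htgt⟩ := hpinf.exists_gt t₁
    have : x t ∈ C t := hmono t₁ t htgt.le (ht₁ (htmem ▸ hpN))
    exact hxC t this
  · obtain ⟨z, hzK, hacc⟩ := exists_accum_of_infinite hK
      (Set.range_subset_iff.2 hxK) hfin
    obtain ⟨N, hN, hNU, hinf⟩ := h𝒩.2 z U hO (hKU hzK) (Set.range x) hacc
    obtain ⟨t₁, ht₁⟩ := hcof N hN hNU
    apply hinf
    have : N ∩ Set.range x ⊆ x '' {t | t < t₁} := by
      rintro y ⟨hyN, t, rfl⟩
      refine ⟨t, ?_, rfl⟩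
      simp only [Set.mem_setOf_eq]
      by_contra hge
      push_neg at hge
      exact hxC t (hmono t₁ t hge (ht₁ hyN))
    exact ((Set.finite_Iio t₁).image x).subset this
end Aux2

section Hyp
variable {X : Type*} [TopologicalSpace X]

local instance hypTop : TopologicalSpace (NonemptyCompactSubsets X) := vietorisTopology X

/-- basic Vietoris-style set: contained in `W`, hitting each member of `𝒱` -/
def vbasic (W : Set X) (𝒱 : Set (Set X)) : Set (NonemptyCompactSubsets X) :=
  {L | L.1 ⊆ W ∧ ∀ v ∈ 𝒱, (L.1 ∩ v).Nonempty}

lemma vbasic_isOpen {W : Set X} {𝒱 : Set (Set X)} (hW : IsOpen W) (h𝒱f : 𝒱.Finite)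
    (h𝒱 : ∀ v ∈ 𝒱, IsOpen v) : IsOpen (vbasic W 𝒱) := by
  have : vbasic W 𝒱 = {L : NonemptyCompactSubsets X | L.1 ⊆ W} ∩
      ⋂ v ∈ 𝒱, {L : NonemptyCompactSubsets X | (L.1 ∩ v).Nonempty} := by
    ext L
    simp [vbasic, Set.mem_iInter]
  rw [this]
  apply IsOpen.inter
  · exact TopologicalSpace.isOpen_generateFrom_of_mem (Or.inl ⟨W, hW, rfl⟩)
  · exact h𝒱f.isOpen_biInter (fun v hv =>
      TopologicalSpace.isOpen_generateFrom_of_mem (Or.inr ⟨v, h𝒱 v hv, rfl⟩))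

lemma isOpen_upper {W : Set X} (hW : IsOpen W) :
    IsOpen {L : NonemptyCompactSubsets X | L.1 ⊆ W} :=
  TopologicalSpace.isOpen_generateFrom_of_mem (Or.inl ⟨W, hW, rfl⟩)

/-- every open set in the Vietoris topology contains a `vbasic` set around each of
its points -/
lemma vietoris_decomp {𝒪 : Set (NonemptyCompactSubsets X)} (h𝒪 : IsOpen 𝒪)
    {𝒦 : NonemptyCompactSubsets X} (h𝒦 : 𝒦 ∈ 𝒪) :
    ∃ (W : Set X) (𝒱 : Set (Set X)), IsOpen W ∧ 𝒱.Finite ∧ (∀ v ∈ 𝒱, IsOpen v) ∧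
      𝒦 ∈ vbasic W 𝒱 ∧ vbasic W 𝒱 ⊆ 𝒪 := by
  have hbasis := TopologicalSpace.isTopologicalBasis_of_subbasis
    (rfl : hypTop (X := X) = TopologicalSpace.generateFrom _)
  obtain ⟨B, hB, h𝒦B, hB𝒪⟩ := hbasis.isOpen_iff.1 h𝒪 𝒦 h𝒦
  obtain ⟨f, ⟨hffin, hfsub⟩, rfl⟩ := hB
  -- process the finite set f into (W, 𝒱)
  suffices h : ∃ (W : Set X) (𝒱 : Set (Set X)), IsOpen W ∧ 𝒱.Finite ∧
      (∀ v ∈ 𝒱, IsOpen v) ∧ ⋂₀ f = vbasic W 𝒱 by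
    obtain ⟨W, 𝒱, hWopen, h𝒱fin, h𝒱open, heq⟩ := h
    exact ⟨W, 𝒱, hWopen, h𝒱fin, h𝒱open, heq ▸ h𝒦B, heq ▸ hB𝒪⟩
  clear h𝒦B hB𝒪 h𝒪 h𝒦
  revert hfsub
  induction f, hffin using Set.Finite.induction_on with
  | empty =>
    intro _
    refine ⟨Set.univ, ∅, isOpen_univ, Set.finite_empty, fun v hv => absurd hv (by simp), ?_⟩
    ext L; simp [vbasic]
  | @insert S f hSf hffin ih =>
    intro hfsub
    obtain ⟨W, 𝒱, hWopen, h𝒱fin, h𝒱open, heq⟩ := ih (fun T hT => hfsub (Set.mem_insert_of_mem S hT))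
    have hS : S ∈ _ ∪ _ := hfsub (Set.mem_insert S f)
    rcases hS with ⟨V₀, hV₀, rfl⟩ | ⟨V₀, hV₀, rfl⟩
    · refine ⟨V₀ ∩ W, 𝒱, hV₀.inter hWopen, h𝒱fin, h𝒱open, ?_⟩
      rw [Set.sInter_insert, heq]
      ext L
      constructor
      · rintro ⟨hLV₀, hLW, hLhits⟩
        exact ⟨Set.subset_inter hLV₀ hLW, hLhits⟩
      · rintro ⟨hLint, hLhits⟩
        exact ⟨hLint.trans Set.inter_subset_left, hLint.trans Set.inter_subset_right, hLhits⟩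
    · refine ⟨W, insert V₀ 𝒱, hWopen, h𝒱fin.insert V₀, ?_, ?_⟩
      · rintro v (rfl | hv)
        · exact hV₀
        · exact h𝒱open v hv
      rw [Set.sInter_insert, heq]
      ext L
      constructor
      · rintro ⟨hLV₀, hLW, hLhits⟩
        refine ⟨hLW, ?_⟩
        rintro v (rfl | hv)
        · exact hLV₀
        · exact hLhits v hv
      · rintro ⟨hLW, hLhits⟩
        exact ⟨hLhits V₀ (Set.mem_insert V₀ 𝒱), hLW,
          fun v hv => hLhits v (Set.mem_insert_of_mem V₀ hv)⟩

end Hyp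


section Core
variable {X : Type*} [TopologicalSpace X]

@[reducible] local instance hypTop2 : TopologicalSpace (NonemptyCompactSubsets X) :=
  vietorisTopology X

/-- the hyperspace analogue `⟨F⟩` of a finite family `F` -/
def hyp (F : Set (Set X)) : Set (NonemptyCompactSubsets X) :=
  {L | L.1 ⊆ ⋃₀ F ∧ ∀ N ∈ F, (L.1 ∩ N).Nonempty}

variable [T2Space X]

theorem main_thm
    (h : ∃ 𝒩 : Set (Set X), 𝒩.Countable ∧ IsPytkeevNetwork 𝒩) :
    ∃ 𝒩 : Set (Set (NonemptyCompactSubsets X)), 𝒩.Countable ∧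
      @IsPytkeevNetwork (NonemptyCompactSubsets X) (vietorisTopology X) 𝒩 := by
  classical
  obtain ⟨𝒩₀, h𝒩₀c, h𝒩₀p⟩ := h
  set 𝒩 : Set (Set X) := uClose 𝒩₀ with h𝒩def
  have hNc : 𝒩.Countable := uClose_countable h𝒩₀c
  have hNp : IsPytkeevNetwork 𝒩 := uClose_pytkeev h𝒩₀p
  have hNu : ∀ A ∈ 𝒩, ∀ B ∈ 𝒩, A ∪ B ∈ 𝒩 := fun A hA B hB => uClose_union hA hB
  refine ⟨(fun F => hyp F) '' {F : Set (Set X) | F.Finite ∧ F ⊆ 𝒩}, ?_, ?_, ?_⟩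
  · exact (Set.countable_setOf_finite_subset hNc).image _
  · -- network part
    intro 𝒦 𝒪 h𝒪 h𝒦
    obtain ⟨W, 𝒱, hW, h𝒱f, h𝒱o, h𝒦mem, hsub⟩ := vietoris_decomp h𝒪 h𝒦
    have h𝒦W : 𝒦.1 ⊆ W := h𝒦mem.1
    have hx₀ : ∃ N ∈ 𝒩, N ⊆ W := by
      obtain ⟨x, hx⟩ := 𝒦.2.2
      obtain ⟨N, hN, _, hNW⟩ := hNp.1 x W hW (h𝒦W hx)
      exact ⟨N, hN, hNW⟩
    obtain ⟨C0, hC0mem, hC0mono, hC0cof⟩ := exists_chain hNc hNu hx₀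
    obtain ⟨t₀, ht₀⟩ := compact_subset_chain hNp hW hC0mono hC0cof 𝒦.2.1 h𝒦W
    have hNv : ∀ v ∈ 𝒱, ∃ N, N ∈ 𝒩 ∧ (𝒦.1 ∩ N).Nonempty ∧ N ⊆ v ∩ W := by
      intro v hv
      obtain ⟨y, hy𝒦, hyv⟩ := h𝒦mem.2 v hv
      obtain ⟨N, hN, hyN, hNvW⟩ := hNp.1 y (v ∩ W) ((h𝒱o v hv).inter hW)
        ⟨hyv, h𝒦W hy𝒦⟩
      exact ⟨N, hN, ⟨y, hy𝒦, hyN⟩, hNvW⟩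
    choose! g hg𝒩 hghit hgsub using hNv
    refine ⟨hyp (insert (C0 t₀) (g '' 𝒱)), ⟨insert (C0 t₀) (g '' 𝒱),
      ⟨(h𝒱f.image g).insert _, ?_⟩, rfl⟩, ?_, ?_⟩
    · rintro N (rfl | ⟨v, hv, rfl⟩)
      · exact (hC0mem t₀).1
      · exact hg𝒩 v hv
    · refine ⟨fun x hx => Set.mem_sUnion.2 ⟨C0 t₀, Set.mem_insert _ _, ht₀ hx⟩, ?_⟩
      rintro N (rfl | ⟨v, hv, rfl⟩)
      · obtain ⟨x, hx⟩ := 𝒦.2.2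
        exact ⟨x, hx, ht₀ hx⟩
      · exact hghit v hv
    · refine Set.Subset.trans ?_ hsub
      rintro L ⟨hLsub, hLhit⟩
      constructor
      · intro x hx
        obtain ⟨N, hN, hxN⟩ := Set.mem_sUnion.1 (hLsub hx)
        rcases hN with rfl | ⟨v, hv, rfl⟩
        · exact (hC0mem t₀).2 hxN
        · exact (hgsub v hv hxN).2
      · intro v hv
        obtain ⟨x, hxL, hxN⟩ := hLhit (g v) (Or.inr ⟨v, hv, rfl⟩)
        exact ⟨x, hxL, (hgsub v hv hxN).1⟩
  · -- Pytkeev part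
    intro 𝒦 𝒪 h𝒪 h𝒦 𝒜 h𝒜
    haveI : Nonempty X := ⟨𝒦.2.2.choose⟩
    obtain ⟨W, 𝒱, hW, h𝒱f, h𝒱o, h𝒦mem, hsub⟩ := vietoris_decomp h𝒪 h𝒦
    have h𝒦W : 𝒦.1 ⊆ W := h𝒦mem.1
    have hsep : ∀ v ∈ 𝒱, ∃ O : Set X, IsOpen O ∧ (𝒦.1 ∩ (v ∩ W ∩ O)).Nonempty ∧
        closure O ∩ 𝒦.1 ⊆ v ∩ W := by
      intro v hv
      obtain ⟨y, hy𝒦, hyv⟩ := h𝒦mem.2 v hv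
      have hyvW : y ∈ v ∩ W := ⟨hyv, h𝒦W hy𝒦⟩
      have hcpt : IsCompact (𝒦.1 \ (v ∩ W)) := 𝒦.2.1.diff ((h𝒱o v hv).inter hW)
      have hynot : y ∉ 𝒦.1 \ (v ∩ W) := fun hc => hc.2 hyvW
      obtain ⟨G, O, hGopen, hOopen, hsubG, hyO, hdisj⟩ :=
        hcpt.separation_of_notMem hynot
      refine ⟨O, hOopen, ⟨y, hy𝒦, hyvW, hyO⟩, ?_⟩
      rintro z ⟨hzcl, hz𝒦⟩
      by_contra hzvW
      have hzG : z ∈ G := hsubG ⟨hz𝒦, hzvW⟩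
      obtain ⟨w, hwG, hwO⟩ := mem_closure_iff.1 hzcl G hGopen hzG
      exact (Set.disjoint_left.1 hdisj hwG) hwO
    choose! O hOopen hOne hOcl using hsep
    set P : Set X → Set X := fun v => v ∩ W ∩ O v with hPdef
    have hPopen : ∀ v ∈ 𝒱, IsOpen (P v) := fun v hv =>
      ((h𝒱o v hv).inter hW).inter (hOopen v hv)
    have hPsub : ∀ v, P v ⊆ v ∩ W := fun v => Set.inter_subset_left
    have hPcl : ∀ v ∈ 𝒱, closure (P v) ∩ 𝒦.1 ⊆ v ∩ W := by
      intro v hv z hz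
      exact hOcl v hv ⟨closure_mono Set.inter_subset_right hz.1, hz.2⟩
    have h𝒦P : 𝒦 ∈ vbasic W (P '' 𝒱) := by
      refine ⟨h𝒦W, ?_⟩
      rintro u ⟨v, hv, rfl⟩
      exact hOne v hv
    have hPVopen : IsOpen (vbasic W (P '' 𝒱)) := by
      refine vbasic_isOpen hW (h𝒱f.image P) ?_
      rintro u ⟨v, hv, rfl⟩
      exact hPopen v hv
    set 𝒜' : Set (NonemptyCompactSubsets X) := 𝒜 ∩ vbasic W (P '' 𝒱) with h𝒜'def
    have h𝒜'acc : AccumulatesAt 𝒜' 𝒦 := accum_inter_nhds h𝒜 (hPVopen.mem_nhds h𝒦P)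
    have h𝒜'W : ∀ L ∈ 𝒜', L.1 ⊆ W := fun L hL => hL.2.1
    have h𝒜'P : ∀ L ∈ 𝒜', ∀ v ∈ 𝒱, (L.1 ∩ P v).Nonempty := fun L hL v hv =>
      hL.2.2 (P v) ⟨v, hv, rfl⟩
    have hx₀ : ∃ N ∈ 𝒩, N ⊆ W := by
      obtain ⟨x, hx⟩ := 𝒦.2.2
      obtain ⟨N, hN, _, hNW⟩ := hNp.1 x W hW (h𝒦W hx)
      exact ⟨N, hN, hNW⟩
    obtain ⟨C0, hC0mem, hC0mono, hC0cof⟩ := exists_chain hNc hNu hx₀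
    have hCVex : ∀ v ∈ 𝒱, ∃ C : ℕ → Set X,
        ((∀ t, C t ∈ 𝒩 ∧ C t ⊆ v ∩ W) ∧ (∀ s t, s ≤ t → C s ⊆ C t) ∧
          (∀ N ∈ 𝒩, N ⊆ v ∩ W → ∃ t, N ⊆ C t)) := by
      intro v hv
      have hne : ∃ N ∈ 𝒩, N ⊆ v ∩ W := by
        obtain ⟨y, hy𝒦, hyv, hyO⟩ := hOne v hv
        obtain ⟨N, hN, _, hNsub⟩ := hNp.1 y (v ∩ W) ((h𝒱o v hv).inter hW) hyv
        exact ⟨N, hN, hNsub⟩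
      obtain ⟨C, hC1, hC2, hC3⟩ := exists_chain hNc hNu hne
      exact ⟨C, hC1, hC2, hC3⟩
    choose! CV hCVmem hCVmono hCVcof using hCVex
    by_contra hcon
    push_neg at hcon
    have hbad : ∀ F : Set (Set X), F.Finite → F ⊆ 𝒩 → hyp F ⊆ vbasic W 𝒱 →
        (hyp F ∩ 𝒜).Finite := by
      intro F hFf hFN hFsub
      exact (hcon (hyp F) ⟨F, ⟨hFf, hFN⟩, rfl⟩ (hFsub.trans hsub))
    have hρex : ∀ L, L ∈ 𝒜' → ∃ t, (L.1 ⊆ C0 t ∧ ∀ s, L.1 ⊆ C0 s → t ≤ s) := by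
      intro L hL
      have hex : ∃ t, L.1 ⊆ C0 t :=
        compact_subset_chain hNp hW hC0mono hC0cof L.2.1 (h𝒜'W L hL)
      exact ⟨Nat.find hex, Nat.find_spec hex, fun s hs => Nat.find_min' hex hs⟩
    choose! rk0 hrk0a hrk0b using hρex
    have hhitex : ∀ (v : Set X) (L : NonemptyCompactSubsets X), v ∈ 𝒱 → L ∈ 𝒜' →
        ∃ t, ((L.1 ∩ CV v t ∩ P v).Nonempty ∧
          ∀ s, (L.1 ∩ CV v s ∩ P v).Nonempty → t ≤ s) := by
      intro v L hv hL
      have hex : ∃ t, (L.1 ∩ CV v t ∩ P v).Nonempty := by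
        obtain ⟨z, hzL, hzP⟩ := h𝒜'P L hL v hv
        obtain ⟨N, hN, hzN, hNsub⟩ := hNp.1 z (P v) (hPopen v hv) hzP
        obtain ⟨t, ht⟩ := hCVcof v hv N hN (hNsub.trans (hPsub v))
        exact ⟨t, z, ⟨hzL, ht hzN⟩, hzP⟩
      exact ⟨Nat.find hex, Nat.find_spec hex, fun s hs => Nat.find_min' hex hs⟩
    choose! rkV hrkVa hrkVb using hhitex
    set 𝒱' : Finset (Set X) := h𝒱f.toFinset with h𝒱'def
    have h𝒱'mem : ∀ v, v ∈ 𝒱' ↔ v ∈ 𝒱 := fun v => h𝒱f.mem_toFinset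
    set HH : NonemptyCompactSubsets X → ℕ :=
      fun L => max (rk0 L) (𝒱'.sup fun v => rkV v L) with hHHdef
    have hΦ : ∀ t : ℕ, {L | L ∈ 𝒜' ∧ HH L ≤ t}.Finite := by
      intro t
      have hsubup : {L | L ∈ 𝒜' ∧ HH L ≤ t} ⊆
          hyp (insert (C0 t) ((fun v => CV v t) '' 𝒱)) ∩ 𝒜 := by
        rintro L ⟨hL𝒜', hHLt⟩
        have hrk0t : rk0 L ≤ t := le_trans (le_max_left _ _) hHLt
        have hLC0 : L.1 ⊆ C0 t := (hrk0a L hL𝒜').trans (hC0mono _ _ hrk0t)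
        refine ⟨⟨?_, ?_⟩, hL𝒜'.1⟩
        · exact fun x hx => Set.mem_sUnion.2 ⟨C0 t, Set.mem_insert _ _, hLC0 hx⟩
        · rintro N (rfl | ⟨v, hv, rfl⟩)
          · obtain ⟨x, hx⟩ := L.2.2
            exact ⟨x, hx, hLC0 hx⟩
          · have hrkVt : rkV v L ≤ t := by
              refine le_trans (le_trans ?_ (le_max_right _ _)) hHLt
              exact Finset.le_sup (f := fun v => rkV v L) ((h𝒱'mem v).2 hv)
            obtain ⟨z, ⟨hzL, hzCV⟩, hzP⟩ := hrkVa v L hv hL𝒜'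
            exact ⟨z, hzL, hCVmono v hv _ _ hrkVt hzCV⟩
      have hsubvb : hyp (insert (C0 t) ((fun v => CV v t) '' 𝒱)) ⊆ vbasic W 𝒱 := by
        rintro L ⟨hLsub, hLhit⟩
        constructor
        · intro x hx
          obtain ⟨N, hN, hxN⟩ := Set.mem_sUnion.1 (hLsub hx)
          rcases hN with rfl | ⟨v, hv, rfl⟩
          · exact (hC0mem t).2 hxN
          · exact ((hCVmem v hv t).2 hxN).2
        · intro v hv
          obtain ⟨x, hxL, hxN⟩ := hLhit (CV v t) (Or.inr ⟨v, hv, rfl⟩)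
          exact ⟨x, hxL, ((hCVmem v hv t).2 hxN).1⟩
      refine Set.Finite.subset (hbad _ ?_ ?_ hsubvb) hsubup
      · exact (h𝒱f.image _).insert _
      · rintro N (rfl | ⟨v, hv, rfl⟩)
        · exact (hC0mem t).1
        · exact (hCVmem v hv t).1
    set B0 : Set (NonemptyCompactSubsets X) := {L | L ∈ 𝒜' ∧ HH L = rk0 L} with hB0def
    set BV : Set X → Set (NonemptyCompactSubsets X) :=
      fun v => {L | L ∈ 𝒜' ∧ HH L = rkV v L} with hBVdef
    have hcover : 𝒜' ⊆ B0 ∪ ⋃ v ∈ 𝒱', BV v := by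
      intro L hL
      rcases le_or_gt (𝒱'.sup fun v => rkV v L) (rk0 L) with hle | hlt
      · exact Or.inl ⟨hL, max_eq_left hle⟩
      · have h𝒱'ne : 𝒱'.Nonempty := by
          rcases Finset.eq_empty_or_nonempty 𝒱' with h𝒱'e | hne
          · rw [h𝒱'e] at hlt
            simp at hlt
          · exact hne
        obtain ⟨v, hv, hveq⟩ := Finset.exists_mem_eq_sup 𝒱' h𝒱'ne (fun v => rkV v L)
        refine Or.inr (Set.mem_biUnion hv ⟨hL, ?_⟩)
        simp only [hHHdef, max_eq_right hlt.le]
        exact hveq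
    have key : False := by
      rcases accum_union h𝒜'acc hcover with hacc0 | haccV
      · -- cover type
        set 𝒜s : Set (NonemptyCompactSubsets X) := 𝒜' ∩ B0 with h𝒜sdef
        have h𝒜smem : ∀ L ∈ 𝒜s, L ∈ 𝒜' ∧ HH L = rk0 L := fun L hL => hL.2
        have hpex : ∀ L, L ∈ 𝒜s → ∃ p, p ∈ L.1 ∧ ∀ s, p ∈ C0 s → rk0 L ≤ s := by
          intro L hL
          by_cases h0 : rk0 L = 0
          · obtain ⟨p, hp⟩ := L.2.2
            exact ⟨p, hp, fun s _ => by omega⟩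
          · obtain ⟨k, hk⟩ := Nat.exists_eq_succ_of_ne_zero h0
            have hnot : ¬L.1 ⊆ C0 k := by
              intro hsubk
              have := hrk0b L (h𝒜smem L hL).1 k hsubk
              omega
            obtain ⟨p, hpL, hpC⟩ := Set.not_subset.1 hnot
            refine ⟨p, hpL, ?_⟩
            intro s hs
            by_contra hlt
            push_neg at hlt
            exact hpC (hC0mono s k (by omega) hs)
        choose! pt hpt1 hpt2 using hpex
        set A : Set X := pt '' 𝒜s with hAdef
        have hfib : ∀ p : X, {L | L ∈ 𝒜s ∧ pt L = p}.Finite := by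
          intro p
          rcases Set.eq_empty_or_nonempty {L | L ∈ 𝒜s ∧ pt L = p} with he | ⟨L₁, hL₁, hpL₁⟩
          · exact he ▸ Set.finite_empty
          · refine (hΦ (rk0 L₁)).subset ?_
            rintro L ⟨hL𝒜s, hptL⟩
            have hpC : pt L ∈ C0 (rk0 L₁) := by
              rw [hptL, ← hpL₁]
              exact hrk0a L₁ (h𝒜smem L₁ hL₁).1 (hpt1 L₁ hL₁)
            have hle := hpt2 L hL𝒜s _ hpC
            exact ⟨(h𝒜smem L hL𝒜s).1, le_trans (le_of_eq (h𝒜smem L hL𝒜s).2) hle⟩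
        have haccA : ∃ y ∈ 𝒦.1, AccumulatesAt A y := by
          by_contra hno
          push_neg at hno
          have hOy : ∀ y ∈ 𝒦.1, ∃ Oy : Set X, IsOpen Oy ∧ y ∈ Oy ∧ (Oy ∩ A).Finite := by
            intro y hy
            have hny := hno y hy
            simp only [AccumulatesAt, not_forall] at hny
            obtain ⟨U, hU, hUinf⟩ := hny
            obtain ⟨Oy, hOysub, hOyopen, hyOy⟩ := mem_nhds_iff.1 hU
            exact ⟨Oy, hOyopen, hyOy, (Set.not_infinite.1 hUinf).subset
              (Set.inter_subset_inter_left A hOysub)⟩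
          choose! Oy hOyo hOym hOyf using hOy
          obtain ⟨tset, htsub, hcov2⟩ := 𝒦.2.1.elim_nhds_subcover Oy
            (fun y hy => (hOyo y hy).mem_nhds (hOym y hy))
          set W₂ : Set X := ⋃ y ∈ tset, Oy y with hW₂def
          have hW₂open : IsOpen W₂ := isOpen_biUnion (fun y hy => hOyo y (htsub y hy))
          have h𝒲₂ : ({L : NonemptyCompactSubsets X | L.1 ⊆ W₂} ∩ 𝒜s).Infinite := by
            have hmem𝒲 : 𝒦 ∈ {L : NonemptyCompactSubsets X | L.1 ⊆ W₂} := hcov2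
            exact hacc0 _ ((isOpen_upper hW₂open).mem_nhds hmem𝒲)
          apply h𝒲₂
          have hsubE : {L : NonemptyCompactSubsets X | L.1 ⊆ W₂} ∩ 𝒜s ⊆
              ⋃ p ∈ ⋃ y ∈ tset, (Oy y ∩ A), {L | L ∈ 𝒜s ∧ pt L = p} := by
            rintro L ⟨hLW₂, hL𝒜s⟩
            have hpmem : pt L ∈ W₂ := hLW₂ (hpt1 L hL𝒜s)
            simp only [hW₂def, Set.mem_iUnion] at hpmem
            obtain ⟨y, hy, hpy⟩ := hpmem
            refine Set.mem_biUnion ?_ ⟨hL𝒜s, rfl⟩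
            exact Set.mem_biUnion hy ⟨hpy, Set.mem_image_of_mem pt hL𝒜s⟩
          refine Set.Finite.subset ?_ hsubE
          refine Set.Finite.biUnion ?_ (fun p _ => hfib p)
          exact tset.finite_toSet.biUnion (fun y hy => hOyf y (htsub y hy))
        obtain ⟨y, hy𝒦, haccy⟩ := haccA
        obtain ⟨N, hN𝒩, hNW, hNinf⟩ := hNp.2 y W hW (h𝒦W hy𝒦) A haccy
        obtain ⟨t₀, ht₀⟩ := hC0cof N hN𝒩 hNW
        apply hNinf
        have hNA : N ∩ A ⊆ pt '' {L | L ∈ 𝒜' ∧ HH L ≤ t₀} := by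
          rintro q ⟨hqN, L, hL𝒜s, rfl⟩
          have hle : rk0 L ≤ t₀ := hpt2 L hL𝒜s t₀ (ht₀ hqN)
          exact ⟨L, ⟨(h𝒜smem L hL𝒜s).1, le_trans (le_of_eq (h𝒜smem L hL𝒜s).2) hle⟩, rfl⟩
        exact ((hΦ t₀).image pt).subset hNA
      · -- hit type
        obtain ⟨v, hv𝒱', haccv⟩ := accum_finset_union 𝒱' BV
          (accum_mono haccV (fun L hL => hL.2)) (fun L hL => hL)
        have hv : v ∈ 𝒱 := (h𝒱'mem v).1 hv𝒱'
        set 𝒜s : Set (NonemptyCompactSubsets X) :=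
          (⋃ w ∈ 𝒱', BV w) ∩ BV v with h𝒜sdef
        have h𝒜smem : ∀ L ∈ 𝒜s, L ∈ 𝒜' ∧ HH L = rkV v L := fun L hL => hL.2
        have hpex : ∀ L, L ∈ 𝒜s → ∃ p, (p ∈ L.1 ∧ p ∈ P v) ∧
            (p ∈ CV v (rkV v L) ∧ ∀ s, p ∈ CV v s → rkV v L ≤ s) := by
          intro L hL
          obtain ⟨z, ⟨hzL, hzCV⟩, hzP⟩ := hrkVa v L hv (h𝒜smem L hL).1
          refine ⟨z, ⟨hzL, hzP⟩, hzCV, ?_⟩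
          intro s hs
          exact hrkVb v L hv (h𝒜smem L hL).1 s ⟨z, ⟨hzL, hs⟩, hzP⟩
        choose! pt hpt1 hpt2 using hpex
        set A : Set X := pt '' 𝒜s with hAdef
        have hAP : A ⊆ P v := by
          rintro q ⟨L, hL, rfl⟩
          exact (hpt1 L hL).2
        have hfib : ∀ p : X, {L | L ∈ 𝒜s ∧ pt L = p}.Finite := by
          intro p
          rcases Set.eq_empty_or_nonempty {L | L ∈ 𝒜s ∧ pt L = p} with he | ⟨L₁, hL₁, hpL₁⟩
          · exact he ▸ Set.finite_empty
          · refine (hΦ (rkV v L₁)).subset ?_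
            rintro L ⟨hL𝒜s, hptL⟩
            have hpC : pt L ∈ CV v (rkV v L₁) := by
              rw [hptL, ← hpL₁]
              exact (hpt2 L₁ hL₁).1
            have hle := (hpt2 L hL𝒜s).2 _ hpC
            exact ⟨(h𝒜smem L hL𝒜s).1, le_trans (le_of_eq (h𝒜smem L hL𝒜s).2) hle⟩
        have haccA : ∃ y ∈ 𝒦.1, AccumulatesAt A y := by
          by_contra hno
          push_neg at hno
          have hOy : ∀ y ∈ 𝒦.1, ∃ Oy : Set X, IsOpen Oy ∧ y ∈ Oy ∧ (Oy ∩ A).Finite := by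
            intro y hy
            have hny := hno y hy
            simp only [AccumulatesAt, not_forall] at hny
            obtain ⟨U, hU, hUinf⟩ := hny
            obtain ⟨Oy, hOysub, hOyopen, hyOy⟩ := mem_nhds_iff.1 hU
            exact ⟨Oy, hOyopen, hyOy, (Set.not_infinite.1 hUinf).subset
              (Set.inter_subset_inter_left A hOysub)⟩
          choose! Oy hOyo hOym hOyf using hOy
          obtain ⟨tset, htsub, hcov2⟩ := 𝒦.2.1.elim_nhds_subcover Oy
            (fun y hy => (hOyo y hy).mem_nhds (hOym y hy))
          set W₂ : Set X := ⋃ y ∈ tset, Oy y with hW₂def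
          have hW₂open : IsOpen W₂ := isOpen_biUnion (fun y hy => hOyo y (htsub y hy))
          have h𝒲₂ : ({L : NonemptyCompactSubsets X | L.1 ⊆ W₂} ∩ 𝒜s).Infinite := by
            have hmem𝒲 : 𝒦 ∈ {L : NonemptyCompactSubsets X | L.1 ⊆ W₂} := hcov2
            exact haccv _ ((isOpen_upper hW₂open).mem_nhds hmem𝒲)
          apply h𝒲₂
          have hsubE : {L : NonemptyCompactSubsets X | L.1 ⊆ W₂} ∩ 𝒜s ⊆
              ⋃ p ∈ ⋃ y ∈ tset, (Oy y ∩ A), {L | L ∈ 𝒜s ∧ pt L = p} := by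
            rintro L ⟨hLW₂, hL𝒜s⟩
            have hpmem : pt L ∈ W₂ := hLW₂ (hpt1 L hL𝒜s).1
            simp only [hW₂def, Set.mem_iUnion] at hpmem
            obtain ⟨y, hy, hpy⟩ := hpmem
            refine Set.mem_biUnion ?_ ⟨hL𝒜s, rfl⟩
            exact Set.mem_biUnion hy ⟨hpy, Set.mem_image_of_mem pt hL𝒜s⟩
          refine Set.Finite.subset ?_ hsubE
          refine Set.Finite.biUnion ?_ (fun p _ => hfib p)
          exact tset.finite_toSet.biUnion (fun y hy => hOyf y (htsub y hy))
        obtain ⟨y, hy𝒦, haccy⟩ := haccA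
        have hyvW : y ∈ v ∩ W := by
          refine hPcl v hv ⟨?_, hy𝒦⟩
          rw [mem_closure_iff]
          intro o hoopen hyo
          obtain ⟨q, hqo, hqA⟩ := (haccy o (hoopen.mem_nhds hyo)).nonempty
          exact ⟨q, hqo, hAP hqA⟩
        obtain ⟨N, hN𝒩, hNvW, hNinf⟩ := hNp.2 y (v ∩ W) ((h𝒱o v hv).inter hW) hyvW A haccy
        obtain ⟨t₀, ht₀⟩ := hCVcof v hv N hN𝒩 hNvW
        apply hNinf
        have hNA : N ∩ A ⊆ pt '' {L | L ∈ 𝒜' ∧ HH L ≤ t₀} := by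
          rintro q ⟨hqN, L, hL𝒜s, rfl⟩
          have hle : rkV v L ≤ t₀ := (hpt2 L hL𝒜s).2 t₀ (ht₀ hqN)
          exact ⟨L, ⟨(h𝒜smem L hL𝒜s).1, le_trans (le_of_eq (h𝒜smem L hL𝒜s).2) hle⟩, rfl⟩
        exact ((hΦ t₀).image pt).subset hNA
    exact key

end Core

/-- If a Hausdorff space `X` has a countable Pytkeev network, then its hyperspace of
nonempty compact subsets with the Vietoris topology has a countable Pytkeev network. -/
theorem hyperspace_countable_pytkeevNetwork {X : Type*} [TopologicalSpace X] [T2Space X]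
    (h : ∃ 𝒩 : Set (Set X), 𝒩.Countable ∧ IsPytkeevNetwork 𝒩) :
    ∃ 𝒩 : Set (Set (NonemptyCompactSubsets X)), 𝒩.Countable ∧
      @IsPytkeevNetwork (NonemptyCompactSubsets X) (vietorisTopology X) 𝒩 := main_thm h
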